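/- arXiv:2403.06722 — 4 statements merged into one kernel-verified Lean document; each statement's English description precedes it below -/
import Mathlib

section
/- For every real s, the function λ ↦ −log(1 − σ(λ;s)) = log(1 + exp(s − λ²)) is integrable on ℝ, and ∫_ℝ log(1 − σ(λ;s)) dλ = −2 ∫_ℝ σ(λ;s) λ² dλ. -/
open MeasureTheory

noncomputable def fermi (τ s : ℝ) : ℝ := 1 / (1 + Real.exp (τ ^ 2 - s))

theorem log_one_sub_fermi_integrable_and_identity (s : ℝ) :
    Integrable (fun lam : ℝ => Real.log (1 + Real.exp (s - lam ^ 2))) ∧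
    (∫ lam : ℝ, Real.log (1 - fermi lam s)) = -2 * ∫ lam : ℝ, fermi lam s * lam ^ 2 := by
  set F : ℝ → ℝ := fun lam => Real.log (1 + Real.exp (s - lam ^ 2)) with hF
  have hpos : ∀ lam : ℝ, 0 < 1 + Real.exp (s - lam ^ 2) := fun lam => by
    positivity
  have fermi_eq : ∀ lam : ℝ, fermi lam s =
      Real.exp (s - lam ^ 2) / (1 + Real.exp (s - lam ^ 2)) := by
    intro lam
    have h1 : Real.exp (lam ^ 2 - s) = (Real.exp (s - lam ^ 2))⁻¹ := by
      rw [show lam ^ 2 - s = -(s - lam ^ 2) by ring, Real.exp_neg]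
    have h2 := Real.exp_pos (s - lam ^ 2)
    rw [fermi, h1]
    field_simp
    ring
  have fermi_nonneg : ∀ lam : ℝ, 0 ≤ fermi lam s := fun lam => by
    rw [fermi_eq]; positivity
  have fermi_le : ∀ lam : ℝ, fermi lam s ≤ Real.exp (s - lam ^ 2) := by
    intro lam
    rw [fermi_eq]
    exact div_le_self (Real.exp_pos _).le (by linarith [Real.exp_pos (s - lam ^ 2)])
  have hF_nonneg : ∀ lam : ℝ, 0 ≤ F lam := fun lam =>
    Real.log_nonneg (by linarith [Real.exp_pos (s - lam ^ 2)])
  have hF_le : ∀ lam : ℝ, F lam ≤ Real.exp (s - lam ^ 2) := by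
    intro lam
    have := Real.log_le_sub_one_of_pos (hpos lam)
    simpa using this
  have hexp_split : ∀ lam : ℝ, Real.exp (s - lam ^ 2)
      = Real.exp s * Real.exp (-1 * lam ^ 2) := by
    intro lam
    rw [← Real.exp_add]; ring_nf
  have hFcont : Continuous F := by
    exact (continuous_const.add ((continuous_const.sub (continuous_pow 2)).rexp)).log
      fun x => ne_of_gt (hpos x)
  have hfermicont : Continuous fun lam : ℝ => fermi lam s := by
    unfold fermi
    apply continuous_const.div
    · exact continuous_const.add (((continuous_pow 2).sub continuous_const).rexp)
    · intro x; positivity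
  -- Integrability of F
  have hF_int : Integrable F := by
    refine Integrable.mono' ((integrable_exp_neg_mul_sq one_pos).const_mul (Real.exp s))
      hFcont.aestronglyMeasurable (Filter.Eventually.of_forall fun lam => ?_)
    rw [Real.norm_of_nonneg (hF_nonneg lam)]
    calc F lam ≤ Real.exp (s - lam ^ 2) := hF_le lam
      _ = Real.exp s * Real.exp (-1 * lam ^ 2) := hexp_split lam
  -- Integrability of fermi * lam^2
  have hH_int : Integrable fun lam : ℝ => fermi lam s * lam ^ 2 := by
    have hbase : Integrable fun x : ℝ => x ^ (2 : ℝ) * Real.exp (-1 * x ^ 2) :=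
      integrable_rpow_mul_exp_neg_mul_sq one_pos (by norm_num)
    have hbase' : Integrable fun x : ℝ => Real.exp s * (x ^ 2 * Real.exp (-1 * x ^ 2)) := by
      refine (Integrable.const_mul ?_ (Real.exp s))
      have : ∀ x : ℝ, x ^ (2 : ℝ) = x ^ (2 : ℕ) := fun x => by
        rw [show ((2 : ℝ) = ((2 : ℕ) : ℝ)) by norm_num, Real.rpow_natCast]
      simpa [this] using hbase
    refine Integrable.mono' hbase'
      ((hfermicont.mul (continuous_pow 2)).aestronglyMeasurable)
      (Filter.Eventually.of_forall fun lam => ?_)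
    rw [Real.norm_of_nonneg (mul_nonneg (fermi_nonneg lam) (sq_nonneg lam))]
    calc fermi lam s * lam ^ 2 ≤ Real.exp (s - lam ^ 2) * lam ^ 2 := by
          exact mul_le_mul_of_nonneg_right (fermi_le lam) (sq_nonneg lam)
      _ = Real.exp s * (lam ^ 2 * Real.exp (-1 * lam ^ 2)) := by
          rw [hexp_split lam]; ring
  -- the function for integration by parts
  set g : ℝ → ℝ := fun lam => -(lam * F lam) with hg
  set D : ℝ → ℝ := fun lam => -(F lam) + 2 * (fermi lam s * lam ^ 2) with hD
  have hderiv : ∀ lam : ℝ, HasDerivAt g (D lam) lam := by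
    intro lam
    have h1 : HasDerivAt (fun x : ℝ => s - x ^ 2) (-(2 * lam ^ 1)) lam :=
      (hasDerivAt_pow 2 lam).const_sub s
    have h2 := h1.exp
    have h3 := h2.const_add 1
    have h4 := h3.log (ne_of_gt (hpos lam))
    have h5 := (hasDerivAt_id lam).mul h4
    have h6 := h5.neg
    convert h6 using 1
    show -(F lam) + 2 * (fermi lam s * lam ^ 2) = _
    rw [fermi_eq lam, hF]
    have h2pos := hpos lam
    simp only [id]
    ring
    all_goals rfl
  have hD_int : Integrable D := by
    exact (hF_int.neg).add ((hH_int.const_mul 2))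
  -- limits at infinity
  have htop : Filter.Tendsto g Filter.atTop (nhds 0) := by
    have hb : Filter.Tendsto (fun lam : ℝ => Real.exp s * (lam * Real.exp (-lam)))
        Filter.atTop (nhds 0) := by
      have := Real.tendsto_pow_mul_exp_neg_atTop_nhds_zero 1
      simp only [pow_one] at this
      simpa using (this.const_mul (Real.exp s))
    refine squeeze_zero_norm' ?_ hb
    filter_upwards [Filter.eventually_ge_atTop (1 : ℝ)] with lam hlam
    have h0 : (0:ℝ) ≤ lam := by linarith
    have h1 : lam ≤ lam ^ 2 := by nlinarith
    have h2 : Real.exp (s - lam ^ 2) ≤ Real.exp s * Real.exp (-lam) := by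
      rw [← Real.exp_add]
      exact Real.exp_le_exp.2 (by linarith)
    rw [hg]
    simp only [norm_neg, Real.norm_eq_abs, abs_mul, abs_of_nonneg h0,
      abs_of_nonneg (hF_nonneg lam)]
    calc lam * F lam ≤ lam * (Real.exp s * Real.exp (-lam)) :=
          mul_le_mul_of_nonneg_left (le_trans (hF_le lam) h2) h0
      _ = Real.exp s * (lam * Real.exp (-lam)) := by ring
  have hbot : Filter.Tendsto g Filter.atBot (nhds 0) := by
    have hcomp : Filter.Tendsto (fun lam : ℝ => g (-lam)) Filter.atBot (nhds 0) :=
      htop.comp Filter.tendsto_neg_atBot_atTop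
    have heq : (fun lam : ℝ => g (-lam)) = fun lam => -(g lam) := by
      funext lam
      simp only [hg, hF, neg_sq, neg_mul, neg_neg]
    rw [heq] at hcomp
    have := hcomp.neg
    simpa using this
  have hint : ∫ lam : ℝ, D lam = 0 := by
    rw [integral_of_hasDerivAt_of_tendsto hderiv hD_int hbot htop]
    simp
  have hneg_int : Integrable fun lam : ℝ => -(F lam) := hF_int.neg
  have hsplit : ∫ lam : ℝ, D lam =
      (-∫ lam : ℝ, F lam) + 2 * ∫ lam : ℝ, fermi lam s * lam ^ 2 := by
    have h := integral_add hneg_int (hH_int.const_mul 2)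
    rw [hD]
    rw [show (∫ lam : ℝ, -(F lam) + 2 * (fermi lam s * lam ^ 2)) = _ from h,
      integral_neg, integral_const_mul]
  have key : ∫ lam : ℝ, F lam = 2 * ∫ lam : ℝ, fermi lam s * lam ^ 2 := by
    rw [hsplit] at hint; linarith
  refine ⟨hF_int, ?_⟩
  have hlog : ∀ lam : ℝ, Real.log (1 - fermi lam s) = -(F lam) := by
    intro lam
    have h1 : 1 - fermi lam s = (1 + Real.exp (s - lam ^ 2))⁻¹ := by
      rw [fermi_eq lam]
      have := hpos lam
      field_simp
      ring
    rw [h1, Real.log_inv]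
  calc (∫ lam : ℝ, Real.log (1 - fermi lam s)) = ∫ lam : ℝ, -(F lam) := by
        congr 1; funext lam; exact hlog lam
    _ = -∫ lam : ℝ, F lam := integral_neg _
    _ = -2 * ∫ lam : ℝ, fermi lam s * lam ^ 2 := by rw [key]; ring
end

section
/- Let L(s) = ∫_0^∞ σ(√s ζ; s) dζ with σ(λ;s) = 1/(1 + exp(λ² − s)). Then L(s) = 1 + O(1/s²) as s → +∞; more precisely, there exist constants C, s₀ > 0 such that |L(s) − 1| ≤ C/s² for all s ≥ s₀. -/
open MeasureTheory

noncomputable def Lfun (s : ℝ) : ℝ := ∫ ζ in Set.Ioi (0 : ℝ), fermi (Real.sqrt s * ζ) s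

section aux
open Real Set

lemma fermi_pos' (τ s : ℝ) : 0 < fermi τ s := by
  unfold fermi; positivity

lemma fermi_le_exp' (τ s : ℝ) : fermi τ s ≤ Real.exp (s - τ ^ 2) := by
  unfold fermi
  rw [div_le_iff₀ (by positivity)]
  have h2 : Real.exp (s - τ ^ 2) * Real.exp (τ ^ 2 - s) = 1 := by
    rw [← Real.exp_add]; ring_nf; exact Real.exp_zero
  nlinarith [Real.exp_pos (s - τ ^ 2), Real.exp_pos (τ ^ 2 - s)]

lemma pair_bound' {s u : ℝ} (hs : 1 ≤ s) (hu0 : 0 ≤ u) (hu1 : u ≤ 1) :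
    |fermi (Real.sqrt s * (1 - u)) s + fermi (Real.sqrt s * (1 + u)) s - 1|
      ≤ 2 * s * u ^ 2 * Real.exp (-(s * u)) := by
  have hs0 : (0:ℝ) ≤ s := by linarith
  have hsq : Real.sqrt s ^ 2 = s := Real.sq_sqrt hs0
  set a := s * (2 * u - u ^ 2) with ha
  set b := s * (2 * u + u ^ 2) with hb
  have h1 : (Real.sqrt s * (1 - u)) ^ 2 - s = -a := by rw [mul_pow, hsq]; ring
  have h2 : (Real.sqrt s * (1 + u)) ^ 2 - s = b := by rw [mul_pow, hsq]; ring
  have hab : a ≤ b := by nlinarith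
  have ha0 : 0 ≤ a := by nlinarith
  have hasu : s * u ≤ a := by nlinarith
  have hea := Real.exp_pos a
  have heb := Real.exp_pos b
  have heab : Real.exp (-a) * Real.exp a = 1 := by rw [← Real.exp_add]; simp
  have e1 : fermi (Real.sqrt s * (1 - u)) s = 1 - 1 / (1 + Real.exp a) := by
    unfold fermi; rw [h1]
    field_simp
    nlinarith [heab]
  have e2 : fermi (Real.sqrt s * (1 + u)) s = 1 / (1 + Real.exp b) := by
    unfold fermi; rw [h2]
  rw [e1, e2]
  have hexble : Real.exp a ≤ Real.exp b := Real.exp_le_exp.2 hab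
  have key : |1 - 1 / (1 + Real.exp a) + 1 / (1 + Real.exp b) - 1|
      = 1 / (1 + Real.exp a) - 1 / (1 + Real.exp b) := by
    rw [abs_of_nonpos]
    · ring
    · have h3 : 1 / (1 + Real.exp b) ≤ 1 / (1 + Real.exp a) := by
        apply one_div_le_one_div_of_le (by positivity); linarith
      linarith
  rw [key]
  have step1 : 1 / (1 + Real.exp a) - 1 / (1 + Real.exp b)
      ≤ Real.exp (-a) - Real.exp (-b) := by
    rw [Real.exp_neg, Real.exp_neg,
        div_sub_div _ _ (by positivity) (by positivity),
        inv_sub_inv (ne_of_gt hea) (ne_of_gt heb),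
        div_le_div_iff₀ (by positivity) (by positivity)]
    nlinarith
  have step2 : Real.exp (-a) - Real.exp (-b) ≤ (b - a) * Real.exp (-a) := by
    have h4 : (a - b) + 1 ≤ Real.exp (a - b) := Real.add_one_le_exp _
    have h5 : Real.exp (-b) = Real.exp (-a) * Real.exp (a - b) := by
      rw [← Real.exp_add]; ring_nf
    nlinarith [Real.exp_pos (-a)]
  have step3 : (b - a) * Real.exp (-a) ≤ 2 * s * u ^ 2 * Real.exp (-(s * u)) := by
    have hba : b - a = 2 * s * u ^ 2 := by rw [ha, hb]; ring
    rw [hba]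
    have : Real.exp (-a) ≤ Real.exp (-(s * u)) := Real.exp_le_exp.2 (by linarith)
    exact mul_le_mul_of_nonneg_left this (by positivity)
  linarith

lemma moment2' {s : ℝ} (hs : 0 < s) :
    ∫ u in Ioi (0:ℝ), u ^ 2 * Real.exp (-(s * u)) = 2 / s ^ 3 := by
  have h := Real.integral_rpow_mul_exp_neg_mul_Ioi (a := 3) (r := s) (by norm_num) hs
  have hcong : ∫ u in Ioi (0:ℝ), u ^ 2 * Real.exp (-(s * u))
      = ∫ t in Ioi (0:ℝ), t ^ ((3:ℝ) - 1) * Real.exp (-(s * t)) := by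
    refine setIntegral_congr_fun measurableSet_Ioi (fun t ht => ?_)
    have : ((3:ℝ) - 1) = ((2:ℕ):ℝ) := by norm_num
    rw [this, Real.rpow_natCast]
  rw [hcong, h]
  have hg : Real.Gamma 3 = 2 := by
    rw [show (3:ℝ) = ((2:ℕ):ℝ) + 1 by norm_num, Real.Gamma_nat_eq_factorial]
    norm_num
  rw [hg, show ((3:ℝ)) = ((3:ℕ):ℝ) by norm_num, Real.rpow_natCast]
  field_simp

lemma moment2_integrable' {s : ℝ} (hs : 0 < s) :
    IntegrableOn (fun u => u ^ 2 * Real.exp (-(s * u))) (Ioi (0:ℝ)) := by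
  have h := integrableOn_rpow_mul_exp_neg_mul_rpow (s := 2) (p := 1) (b := s)
    (by norm_num) one_pos hs
  refine h.congr_fun (fun t ht => ?_) measurableSet_Ioi
  dsimp only
  rw [Real.rpow_one, show ((2:ℝ)) = ((2:ℕ):ℝ) by norm_num, Real.rpow_natCast,
    neg_mul]

end aux

theorem Lfun_asymptotics :
    ∃ C > (0 : ℝ), ∃ s₀ > (0 : ℝ), ∀ s ≥ s₀, |Lfun s - 1| ≤ C / s ^ 2 := by
  refine ⟨5, by norm_num, 1, by norm_num, fun s hs => ?_⟩
  have hs0 : (0:ℝ) < s := by linarith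
  set f : ℝ → ℝ := fun ζ => fermi (Real.sqrt s * ζ) s with hf
  have hfc : Continuous f := by
    unfold f; unfold fermi
    exact continuous_const.div (by continuity) (fun x => by positivity)
  have hfpos : ∀ ζ, 0 < f ζ := fun ζ => fermi_pos' _ _
  have hfle : ∀ ζ : ℝ, f ζ ≤ Real.exp (s - s * ζ ^ 2) := by
    intro ζ
    have := fermi_le_exp' (Real.sqrt s * ζ) s
    rwa [mul_pow, Real.sq_sqrt hs0.le] at this
  -- integrability on Ioi 0
  have hint : IntegrableOn f (Set.Ioi (0:ℝ)) := by
    have hg : Integrable (fun ζ : ℝ => Real.exp s * Real.exp (-s * ζ ^ 2)) :=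
      (integrable_exp_neg_mul_sq hs0).const_mul _
    refine (hg.integrableOn.mono' hfc.aestronglyMeasurable.restrict ?_)
    filter_upwards with ζ
    rw [Real.norm_eq_abs, abs_of_pos (hfpos ζ)]
    calc f ζ ≤ Real.exp (s - s * ζ ^ 2) := hfle ζ
      _ = Real.exp s * Real.exp (-s * ζ ^ 2) := by rw [← Real.exp_add]; ring_nf
  -- split the integral
  have hsplit : Lfun s = (∫ ζ in Set.Ioc (0:ℝ) 2, f ζ) + ∫ ζ in Set.Ioi (2:ℝ), f ζ := by
    have hun : Set.Ioc (0:ℝ) 2 ∪ Set.Ioi 2 = Set.Ioi 0 :=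
      Set.Ioc_union_Ioi_eq_Ioi (by norm_num)
    rw [show Lfun s = ∫ ζ in Set.Ioi (0:ℝ), f ζ from rfl, ← hun,
      setIntegral_union (Set.Ioc_disjoint_Ioi le_rfl) measurableSet_Ioi
        (hint.mono_set (by rw [← hun]; exact Set.subset_union_left))
        (hint.mono_set (by rw [← hun]; exact Set.subset_union_right))]
  have hIoc : (∫ ζ in Set.Ioc (0:ℝ) 2, f ζ) = ∫ ζ in (0:ℝ)..2, f ζ :=
    (intervalIntegral.integral_of_le (by norm_num)).symm
  have hadj : (∫ ζ in (0:ℝ)..2, f ζ) = (∫ ζ in (0:ℝ)..1, f ζ) + ∫ ζ in (1:ℝ)..2, f ζ :=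
    (intervalIntegral.integral_add_adjacent_intervals
      (hfc.intervalIntegrable 0 1) (hfc.intervalIntegrable 1 2)).symm
  have hcomp1 : (∫ u in (0:ℝ)..1, f (1 - u)) = ∫ ζ in (0:ℝ)..1, f ζ := by
    simpa using intervalIntegral.integral_comp_sub_left f 1
  have hcomp2 : (∫ u in (0:ℝ)..1, f (1 + u)) = ∫ ζ in (1:ℝ)..2, f ζ := by
    have h1 : (∫ u in (0:ℝ)..1, f (1 + u)) = ∫ u in (0:ℝ)..1, f (u + 1) := by
      apply intervalIntegral.integral_congr; intro x _; simp [add_comm]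
    rw [h1, intervalIntegral.integral_comp_add_right f 1]
    norm_num
  have hi1 : IntervalIntegrable (fun u => f (1 - u)) volume 0 1 :=
    (hfc.comp (by continuity)).intervalIntegrable 0 1
  have hi2 : IntervalIntegrable (fun u => f (1 + u)) volume 0 1 :=
    (hfc.comp (by continuity)).intervalIntegrable 0 1
  have hmain : Lfun s - 1
      = (∫ u in (0:ℝ)..1, (f (1 - u) + f (1 + u) - 1)) + ∫ ζ in Set.Ioi (2:ℝ), f ζ := by
    have h1 : (∫ u in (0:ℝ)..1, (f (1 - u) + f (1 + u) - 1))
        = (∫ u in (0:ℝ)..1, f (1 - u)) + (∫ u in (0:ℝ)..1, f (1 + u)) - 1 := by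
      rw [intervalIntegral.integral_sub (hi1.add hi2) (intervalIntegrable_const),
        intervalIntegral.integral_add hi1 hi2]
      simp
    rw [h1, hcomp1, hcomp2, hsplit, hIoc, hadj]; ring
  -- bound the pair integral
  have hb_cont : Continuous (fun u : ℝ => 2 * s * u ^ 2 * Real.exp (-(s * u))) := by
    continuity
  have hA : |∫ u in (0:ℝ)..1, (f (1 - u) + f (1 + u) - 1)| ≤ 4 / s ^ 2 := by
    calc |∫ u in (0:ℝ)..1, (f (1 - u) + f (1 + u) - 1)|
        ≤ ∫ u in (0:ℝ)..1, |f (1 - u) + f (1 + u) - 1| :=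
          intervalIntegral.abs_integral_le_integral_abs (by norm_num)
      _ ≤ ∫ u in (0:ℝ)..1, 2 * s * u ^ 2 * Real.exp (-(s * u)) := by
          refine intervalIntegral.integral_mono_on (by norm_num)
            ((hi1.add hi2).sub intervalIntegrable_const).abs
            (hb_cont.intervalIntegrable 0 1) (fun u hu => ?_)
          exact pair_bound' hs hu.1 hu.2
      _ ≤ ∫ u in Set.Ioi (0:ℝ), 2 * s * u ^ 2 * Real.exp (-(s * u)) := by
          rw [intervalIntegral.integral_of_le (by norm_num)]
          refine setIntegral_mono_set ?_ ?_ ?_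
          · have h' := (moment2_integrable' hs0).const_mul (2 * s)
            exact IntegrableOn.congr_fun h' (fun u _ => by ring) measurableSet_Ioi
          · filter_upwards with u; positivity
          · exact HasSubset.Subset.eventuallyLE Set.Ioc_subset_Ioi_self
      _ = 4 / s ^ 2 := by
          have : (∫ u in Set.Ioi (0:ℝ), 2 * s * u ^ 2 * Real.exp (-(s * u)))
              = 2 * s * ∫ u in Set.Ioi (0:ℝ), u ^ 2 * Real.exp (-(s * u)) := by
            rw [← integral_const_mul]
            exact setIntegral_congr_fun measurableSet_Ioi (fun u _ => by ring)
          rw [this, moment2' hs0]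
          field_simp
          ring
  -- bound the tail
  have hB : |∫ ζ in Set.Ioi (2:ℝ), f ζ| ≤ 1 / s ^ 2 := by
    rw [abs_of_nonneg (setIntegral_nonneg measurableSet_Ioi (fun ζ _ => (hfpos ζ).le))]
    have hbd : ∀ ζ ∈ Set.Ioi (2:ℝ), f ζ ≤ Real.exp (-3 * s + 2) * Real.exp (-ζ) := by
      intro ζ hζ
      have hζ2 : (2:ℝ) < ζ := hζ
      calc f ζ ≤ Real.exp (s - s * ζ ^ 2) := hfle ζ
        _ ≤ Real.exp (-3 * s + 2 - ζ) := by
            apply Real.exp_le_exp.2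
            nlinarith [mul_nonneg (by linarith : (0:ℝ) ≤ ζ - 2) (by linarith : (0:ℝ) ≤ ζ + 1),
              mul_nonneg (mul_nonneg (by linarith : (0:ℝ) ≤ s - 1)
                (by linarith : (0:ℝ) ≤ ζ - 2)) (by linarith : (0:ℝ) ≤ ζ + 2)]
        _ = Real.exp (-3 * s + 2) * Real.exp (-ζ) := by
            rw [← Real.exp_add]; ring_nf
    have hexpint : IntegrableOn (fun ζ : ℝ => Real.exp (-ζ)) (Set.Ioi (2:ℝ)) :=
      (exp_neg_integrableOn_Ioi 2 one_pos).congr_fun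
        (fun x _ => by dsimp only; rw [neg_one_mul]) measurableSet_Ioi
    calc (∫ ζ in Set.Ioi (2:ℝ), f ζ)
        ≤ ∫ ζ in Set.Ioi (2:ℝ), Real.exp (-3 * s + 2) * Real.exp (-ζ) :=
          setIntegral_mono_on (hint.mono_set (Set.Ioi_subset_Ioi (by norm_num)))
            (hexpint.const_mul _) measurableSet_Ioi hbd
      _ = Real.exp (-3 * s + 2) * Real.exp (-2) := by
          rw [integral_const_mul, integral_exp_neg_Ioi]
      _ = Real.exp (-(3 * s)) := by rw [← Real.exp_add]; ring_nf
      _ ≤ 1 / s ^ 2 := by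
          rw [Real.exp_neg, one_div, inv_le_inv₀ (Real.exp_pos _) (by positivity)]
          have h1 : s + 1 ≤ Real.exp s := Real.add_one_le_exp s
          have h2 : Real.exp (3 * s) = Real.exp s * Real.exp s * Real.exp s := by
            rw [← Real.exp_add, ← Real.exp_add]; ring_nf
          rw [h2]
          nlinarith [Real.exp_pos s]
  have habs : |Lfun s - 1| ≤ 4 / s ^ 2 + 1 / s ^ 2 := by
    rw [hmain]
    exact (abs_add_le _ _).trans (add_le_add hA hB)
  calc |Lfun s - 1| ≤ 4 / s ^ 2 + 1 / s ^ 2 := habs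
    _ = 5 / s ^ 2 := by ring
end

section
/- Define C₊(l) = −2/(3l) + 1/(4l²) for l > 0 and C₋(l) = −1/2 + l²/12. Then C₊ and C₋ have the same value, first derivative, and second derivative at l = 1 (all three quantities agreeing: C₊(1) = C₋(1) = −5/12, C₊'(1) = C₋'(1) = 1/6, C₊''(1) = C₋''(1) = 1/6), but their third derivatives at l = 1 differ: C₊'''(1) = −2 while C₋'''(1) = 0. -/
noncomputable def Cplus (l : ℝ) : ℝ := -2 / (3 * l) + 1 / (4 * l ^ 2)

noncomputable def Cminus (l : ℝ) : ℝ := -1 / 2 + l ^ 2 / 12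

noncomputable def D1 (x : ℝ) : ℝ := 2 / (3 * x ^ 2) - 1 / (2 * x ^ 3)
noncomputable def D2 (x : ℝ) : ℝ := -4 / (3 * x ^ 3) + 3 / (2 * x ^ 4)
noncomputable def D3 (x : ℝ) : ℝ := 4 / x ^ 4 - 6 / x ^ 5

lemma hasDerivAt_cdiv (c a : ℝ) (n : ℕ) (x : ℝ) (hx : a * x ^ n ≠ 0) :
    HasDerivAt (fun y : ℝ => c / (a * y ^ n)) (c * (-(a * (n * x ^ (n - 1))) / (a * x ^ n) ^ 2)) x := by
  have h := (((hasDerivAt_pow n x).const_mul a).inv hx).const_mul c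
  simpa [div_eq_mul_inv] using h

lemma hC : ∀ x : ℝ, x ≠ 0 → HasDerivAt Cplus (D1 x) x := by
  intro x hx
  have h1 := hasDerivAt_cdiv (-2) 3 1 x (by simpa using hx)
  have h2 := hasDerivAt_cdiv 1 4 2 x (by simpa using pow_ne_zero 2 hx)
  have h := h1.add h2
  have he : Cplus = fun y : ℝ => -2 / (3 * y ^ 1) + 1 / (4 * y ^ 2) := by
    funext y; simp [Cplus]
  rw [he]
  refine h.congr_deriv ?_
  unfold D1
  field_simp
  ring

lemma hD1 : ∀ x : ℝ, x ≠ 0 → HasDerivAt D1 (D2 x) x := by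
  intro x hx
  have h1 := hasDerivAt_cdiv 2 3 2 x (by simpa using pow_ne_zero 2 hx)
  have h2 := hasDerivAt_cdiv 1 2 3 x (by simpa using pow_ne_zero 3 hx)
  have h := h1.sub h2
  have he : D1 = fun y : ℝ => 2 / (3 * y ^ 2) - 1 / (2 * y ^ 3) := rfl
  rw [he]
  refine h.congr_deriv ?_
  unfold D2
  field_simp
  ring

lemma hD2 : ∀ x : ℝ, x ≠ 0 → HasDerivAt D2 (D3 x) x := by
  intro x hx
  have h1 := hasDerivAt_cdiv (-4) 3 3 x (by simpa using pow_ne_zero 3 hx)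
  have h2 := hasDerivAt_cdiv 3 2 4 x (by simpa using pow_ne_zero 4 hx)
  have h := h1.add h2
  have he : D2 = fun y : ℝ => -4 / (3 * y ^ 3) + 3 / (2 * y ^ 4) := rfl
  rw [he]
  refine h.congr_deriv ?_
  unfold D3
  field_simp
  ring

lemma ne_zero_nhds : ∀ᶠ x : ℝ in nhds 1, x ≠ 0 :=
  eventually_ne_nhds one_ne_zero

lemma deriv_Cplus_eq : deriv Cplus =ᶠ[nhds 1] D1 :=
  ne_zero_nhds.mono fun x hx => (hC x hx).deriv

lemma deriv2_Cplus_eq : deriv (deriv Cplus) =ᶠ[nhds 1] D2 := by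
  have h0 : ∀ᶠ x : ℝ in nhds 1, deriv Cplus =ᶠ[nhds x] D1 := by
    refine eventually_eventually_nhds.mpr ?_
    filter_upwards [ne_zero_nhds] with x hx
    exact (hC x hx).deriv
  filter_upwards [h0, ne_zero_nhds] with x h1 h2
  rw [h1.deriv_eq, (hD1 x h2).deriv]

lemma deriv3_Cplus_eq : deriv (deriv (deriv Cplus)) 1 = D3 1 := by
  have h0 : ∀ᶠ x : ℝ in nhds 1, deriv Cplus =ᶠ[nhds x] D1 := by
    refine eventually_eventually_nhds.mpr ?_
    filter_upwards [ne_zero_nhds] with x hx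
    exact (hC x hx).deriv
  have h2 : deriv (deriv Cplus) =ᶠ[nhds 1] D2 := by
    filter_upwards [h0, ne_zero_nhds] with x h1 hx
    rw [h1.deriv_eq, (hD1 x hx).deriv]
  rw [h2.deriv_eq, (hD2 1 one_ne_zero).deriv]

theorem third_order_phase_transition :
    Cplus 1 = -5 / 12 ∧ Cminus 1 = -5 / 12 ∧
    deriv Cplus 1 = 1 / 6 ∧ deriv Cminus 1 = 1 / 6 ∧
    iteratedDeriv 2 Cplus 1 = 1 / 6 ∧ iteratedDeriv 2 Cminus 1 = 1 / 6 ∧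
    iteratedDeriv 3 Cplus 1 = -2 ∧ iteratedDeriv 3 Cminus 1 = 0 := by
  have hCm : ∀ x : ℝ, HasDerivAt Cminus (x / 6) x := by
    intro x
    have := ((hasDerivAt_pow 2 x).div_const 12).const_add (-1/2 : ℝ)
    refine this.congr_deriv ?_
    push_cast; ring
  have hCm' : deriv Cminus = fun x : ℝ => x / 6 := by
    funext x; exact (hCm x).deriv
  have hCm2 : deriv (deriv Cminus) = fun _ : ℝ => (1/6 : ℝ) := by
    rw [hCm']
    funext x
    simpa using ((hasDerivAt_id x).div_const 6).deriv
  refine ⟨by norm_num [Cplus], by norm_num [Cminus], ?_, ?_, ?_, ?_, ?_, ?_⟩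
  · rw [(hC 1 one_ne_zero).deriv]; norm_num [D1]
  · rw [hCm']
  · rw [iteratedDeriv_succ, iteratedDeriv_one, deriv2_Cplus_eq.self_of_nhds]
    norm_num [D2]
  · rw [iteratedDeriv_succ, iteratedDeriv_one, hCm2]
  · rw [iteratedDeriv_succ, iteratedDeriv_succ, iteratedDeriv_one, deriv3_Cplus_eq]
    norm_num [D3]
  · rw [iteratedDeriv_succ, iteratedDeriv_succ, iteratedDeriv_one, hCm2]
    simp
end

section
/- Let σ: ℝ → ℝ be continuous, nonnegative, even, and integrable with ∫_ℝ (1+|ζ|)σ(ζ)dζ < ∞. Then lim_{ε→0⁺} ∫_{ℝ²} ζ σ(ζ) σ(λ) / (ζ − λ − iε) dλ dζ = (1/2)·( ∫_ℝ σ(λ) dλ )². -/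
open MeasureTheory Filter

private lemma sym_aux (ε a b s t : ℝ) (hε : ε ≠ 0) :
    ((a * s * t : ℝ) : ℂ) / ((a:ℂ) - b - ε*Complex.I)
      + ((b * t * s : ℝ):ℂ) / ((b:ℂ) - a - ε*Complex.I)
      = ((s * t * ((a-b)^2 / ((a-b)^2 + ε^2)) : ℝ) : ℂ)
        + (ε:ℂ) * Complex.I * ((s * t * ((a+b) / ((a-b)^2 + ε^2)) : ℝ) : ℂ) := by
  have hd1 : ((a:ℂ) - b - ε*Complex.I) ≠ 0 := by
    intro h; have := congrArg Complex.im h; simp at this; exact hε this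
  have hd2 : ((b:ℂ) - a - ε*Complex.I) ≠ 0 := by
    intro h; have := congrArg Complex.im h; simp at this; exact hε this
  have hd4 : ((a:ℂ) - b + ε*Complex.I) ≠ 0 := by
    intro h; have := congrArg Complex.im h; simp at this; exact hε this
  have key : (((a:ℂ)-b)^2 + (ε:ℂ)^2) = ((a:ℂ) - b - ε*Complex.I) * ((a:ℂ) - b + ε*Complex.I) := by
    ring_nf; rw [Complex.I_sq]; ring
  push_cast
  rw [key]
  field_simp
  ring

private lemma diag_null : (volume : Measure (ℝ×ℝ)) {p | p.1 = p.2} = 0 := by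
  rw [Measure.volume_eq_prod,
    Measure.prod_apply (measurableSet_eq_fun measurable_fst measurable_snd)]
  have h : ∀ a : ℝ, (Prod.mk a ⁻¹' {p : ℝ×ℝ | p.1 = p.2}) = {a} := by
    intro a; ext b; simp [eq_comm]
  simp [h]

set_option maxHeartbeats 1600000 in
theorem symmetrization_double_integral
    (σ : ℝ → ℝ) (hcont : Continuous σ) (hnonneg : ∀ x, 0 ≤ σ x)
    (heven : ∀ x, σ (-x) = σ x) (hInt : Integrable σ)
    (hInt1 : Integrable (fun ζ : ℝ => (1 + |ζ|) * σ ζ)) :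
    Tendsto (fun ε : ℝ =>
        ∫ p : ℝ × ℝ, ((p.1 * σ p.1 * σ p.2 : ℝ) : ℂ) /
          ((p.1 : ℂ) - (p.2 : ℂ) - (ε : ℂ) * Complex.I))
      (nhdsWithin 0 (Set.Ioi 0))
      (nhds ((((∫ lam : ℝ, σ lam) ^ 2 / 2 : ℝ) : ℂ))) := by
  have hvol : (volume : Measure (ℝ×ℝ)) = (volume : Measure ℝ).prod volume :=
    Measure.volume_eq_prod _ _
  -- basic integrability
  have hg1int : Integrable (fun x : ℝ => |x| * σ x) := by
    refine hInt1.mono' ((continuous_abs.mul hcont).aestronglyMeasurable) ?_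
    filter_upwards with x
    have := hnonneg x
    rw [Real.norm_eq_abs, abs_mul, abs_abs, abs_of_nonneg this]
    nlinarith [abs_nonneg x]
  have hσσ : Integrable (fun p : ℝ×ℝ => σ p.1 * σ p.2) := by
    rw [hvol]; exact hInt.mul_prod hInt
  have hgg : Integrable (fun p : ℝ×ℝ => ((1+|p.1|)*σ p.1) * ((1+|p.2|)*σ p.2)) := by
    rw [hvol]; exact hInt1.mul_prod hInt1
  have hg1σ : Integrable (fun p : ℝ×ℝ => (|p.1| * σ p.1) * σ p.2) := by
    rw [hvol]; exact hg1int.mul_prod hInt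
  -- integrability of the main integrand
  have hden : ∀ (ε a b : ℝ), ε ≠ 0 → ((a:ℂ) - b - ε*Complex.I) ≠ 0 := by
    intro ε a b hε h
    have := congrArg Complex.im h
    simp at this
    exact hε this
  have hf_int : ∀ ε : ℝ, 0 < ε → Integrable (fun p : ℝ×ℝ =>
      ((p.1 * σ p.1 * σ p.2 : ℝ) : ℂ) / ((p.1:ℂ) - p.2 - ε*Complex.I)) := by
    intro ε hε
    have hc1 : Continuous (fun p : ℝ×ℝ => ((p.1 * σ p.1 * σ p.2 : ℝ) : ℂ) /
        ((p.1:ℂ) - p.2 - ε*Complex.I)) := by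
      refine Continuous.div ?_ ?_ (fun p => hden ε p.1 p.2 (ne_of_gt hε)) <;> continuity
    refine ((hg1σ.div_const ε).mono' hc1.aestronglyMeasurable ?_)
    filter_upwards with p
    rw [norm_div, Complex.norm_real, Real.norm_eq_abs]
    have hden_ge : ε ≤ ‖((p.1:ℂ) - p.2 - ε*Complex.I)‖ := by
      have him : ((p.1:ℂ) - p.2 - ε*Complex.I).im = -ε := by simp
      calc ε = |(((p.1:ℂ) - p.2 - ε*Complex.I).im)| := by rw [him, abs_neg, abs_of_pos hε]
        _ ≤ ‖_‖ := Complex.abs_im_le_norm _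
    have h1 : |p.1 * σ p.1 * σ p.2| = |p.1| * σ p.1 * σ p.2 := by
      rw [abs_mul, abs_mul, abs_of_nonneg (hnonneg p.1), abs_of_nonneg (hnonneg p.2)]
    rw [h1]
    exact div_le_div_of_nonneg_left
      (mul_nonneg (mul_nonneg (abs_nonneg _) (hnonneg _)) (hnonneg _)) hε hden_ge
  -- the real symmetric part: integrability
  have hR_bound : ∀ (ε : ℝ) (p : ℝ×ℝ),
      ‖σ p.1 * σ p.2 * ((p.1-p.2)^2/((p.1-p.2)^2+ε^2))‖ ≤ σ p.1 * σ p.2 := by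
    intro ε p
    have hσp : 0 ≤ σ p.1 * σ p.2 := mul_nonneg (hnonneg _) (hnonneg _)
    have h0 : 0 ≤ (p.1-p.2)^2/((p.1-p.2)^2+ε^2) := by positivity
    have h1 : (p.1-p.2)^2/((p.1-p.2)^2+ε^2) ≤ 1 := by
      rcases eq_or_ne ((p.1-p.2)^2+ε^2) 0 with h | h
      · simp [h]
      · rw [div_le_one (lt_of_le_of_ne (by positivity) (Ne.symm h))]; nlinarith
    rw [Real.norm_eq_abs, abs_mul, abs_of_nonneg hσp, abs_of_nonneg h0]
    nlinarith
  have hR_int : ∀ ε : ℝ, 0 < ε → Integrable (fun p : ℝ×ℝ =>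
      σ p.1 * σ p.2 * ((p.1-p.2)^2/((p.1-p.2)^2+ε^2))) := by
    intro ε hε
    have hc1 : Continuous (fun p : ℝ×ℝ =>
        σ p.1 * σ p.2 * ((p.1-p.2)^2/((p.1-p.2)^2+ε^2))) := by
      exact ((hcont.comp continuous_fst).mul (hcont.comp continuous_snd)).mul
        (Continuous.div ((continuous_fst.sub continuous_snd).pow 2)
          (((continuous_fst.sub continuous_snd).pow 2).add continuous_const)
          (fun p => by positivity))
    exact hσσ.mono' hc1.aestronglyMeasurable (Filter.Eventually.of_forall (hR_bound ε))
  have hS_int : ∀ ε : ℝ, 0 < ε → Integrable (fun p : ℝ×ℝ =>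
      σ p.1 * σ p.2 * ((p.1+p.2)/((p.1-p.2)^2+ε^2))) := by
    intro ε hε
    have hc1 : Continuous (fun p : ℝ×ℝ =>
        σ p.1 * σ p.2 * ((p.1+p.2)/((p.1-p.2)^2+ε^2))) := by
      exact ((hcont.comp continuous_fst).mul (hcont.comp continuous_snd)).mul
        (Continuous.div (continuous_fst.add continuous_snd)
          (((continuous_fst.sub continuous_snd).pow 2).add continuous_const)
          (fun p => by positivity))
    refine (hgg.div_const (ε^2)).mono' hc1.aestronglyMeasurable ?_
    filter_upwards with p
    have hσp : 0 ≤ σ p.1 * σ p.2 := mul_nonneg (hnonneg _) (hnonneg _)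
    have e1 : |p.1 + p.2| ≤ (1+|p.1|)*(1+|p.2|) := by
      calc |p.1 + p.2| ≤ |p.1| + |p.2| := abs_add_le _ _
        _ ≤ (1+|p.1|)*(1+|p.2|) := by nlinarith [abs_nonneg p.1, abs_nonneg p.2]
    have e2 : |(p.1+p.2)/((p.1-p.2)^2+ε^2)| ≤ (1+|p.1|)*(1+|p.2|)/ε^2 := by
      rw [abs_div, abs_of_pos (show (0:ℝ) < (p.1-p.2)^2+ε^2 by positivity)]
      exact div_le_div₀ (by positivity) e1 (by positivity) (by nlinarith)
    rw [Real.norm_eq_abs, abs_mul, abs_of_nonneg hσp]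
    calc σ p.1 * σ p.2 * |(p.1+p.2)/((p.1-p.2)^2+ε^2)|
        ≤ σ p.1 * σ p.2 * ((1+|p.1|)*(1+|p.2|)/ε^2) := by
          exact mul_le_mul_of_nonneg_left e2 hσp
      _ = (1+|p.1|)*σ p.1 * ((1+|p.2|)*σ p.2) / ε^2 := by ring
  -- the odd part integrates to zero
  have hS_zero : ∀ ε : ℝ,
      (∫ p : ℝ×ℝ, σ p.1 * σ p.2 * ((p.1+p.2)/((p.1-p.2)^2+ε^2))) = 0 := by
    intro ε
    set S : ℝ×ℝ → ℝ := fun p => σ p.1 * σ p.2 * ((p.1+p.2)/((p.1-p.2)^2+ε^2)) with hS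
    have h1 : ∫ p : ℝ×ℝ, S p = ∫ p : ℝ×ℝ, S (-p) := (integral_neg_eq_self S volume).symm
    have h2 : ∫ p : ℝ×ℝ, S (-p) = ∫ p : ℝ×ℝ, S (-(p.swap)) := by
      rw [hvol]
      exact (Measure.measurePreserving_swap.integral_comp
        MeasurableEquiv.prodComm.measurableEmbedding (fun p => S (-p))).symm
    have h3 : ∀ p : ℝ×ℝ, S (-(p.swap)) = - S p := by
      intro p
      simp only [hS, Prod.fst_neg, Prod.snd_neg, Prod.fst_swap, Prod.snd_swap, heven]
      ring
    have h4 : ∫ p : ℝ×ℝ, S p = - ∫ p : ℝ×ℝ, S p := by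
      conv_lhs => rw [h1, h2]
      simp_rw [h3]
      rw [integral_neg]
    linarith
  -- symmetrization identity for the integral
  have hEq : ∀ ε : ℝ, 0 < ε →
      (∫ p : ℝ×ℝ, ((p.1 * σ p.1 * σ p.2 : ℝ) : ℂ) / ((p.1:ℂ) - p.2 - ε*Complex.I))
        = ((((∫ p : ℝ×ℝ, σ p.1 * σ p.2 * ((p.1-p.2)^2/((p.1-p.2)^2+ε^2))) / 2 : ℝ)) : ℂ) := by
    intro ε hε
    set F : ℝ×ℝ → ℂ := fun p =>
      ((p.1 * σ p.1 * σ p.2 : ℝ) : ℂ) / ((p.1:ℂ) - p.2 - ε*Complex.I) with hF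
    have hFi : Integrable F := hf_int ε hε
    have hFswap_i : Integrable (fun p : ℝ×ℝ => F p.swap) := by
      rw [hvol]
      exact (Measure.measurePreserving_swap.integrable_comp_emb
        MeasurableEquiv.prodComm.measurableEmbedding).mpr (hvol ▸ hFi)
    have hswap_eq : ∫ p : ℝ×ℝ, F p.swap = ∫ p : ℝ×ℝ, F p := by
      rw [hvol]
      exact Measure.measurePreserving_swap.integral_comp
        MeasurableEquiv.prodComm.measurableEmbedding F
    have hkey : ∀ p : ℝ×ℝ, F p + F p.swap
        = ((σ p.1 * σ p.2 * ((p.1-p.2)^2/((p.1-p.2)^2+ε^2)) : ℝ) : ℂ)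
          + (ε:ℂ) * Complex.I * ((σ p.1 * σ p.2 * ((p.1+p.2)/((p.1-p.2)^2+ε^2)) : ℝ) : ℂ) := by
      intro p
      exact sym_aux ε p.1 p.2 (σ p.1) (σ p.2) (ne_of_gt hε)
    have hsum : (∫ p : ℝ×ℝ, F p) + (∫ p : ℝ×ℝ, F p)
        = ((∫ p : ℝ×ℝ, σ p.1 * σ p.2 * ((p.1-p.2)^2/((p.1-p.2)^2+ε^2)) : ℝ) : ℂ) := by
      nth_rewrite 2 [← hswap_eq]
      rw [← integral_add hFi hFswap_i]
      simp_rw [hkey]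
      have hA : Integrable (fun p : ℝ×ℝ =>
          ((σ p.1 * σ p.2 * ((p.1-p.2)^2/((p.1-p.2)^2+ε^2)) : ℝ) : ℂ)) volume :=
        (hR_int ε hε).ofReal
      have hB : Integrable (fun p : ℝ×ℝ =>
          (ε:ℂ) * Complex.I * ((σ p.1 * σ p.2 * ((p.1+p.2)/((p.1-p.2)^2+ε^2)) : ℝ) : ℂ)) volume :=
        ((hS_int ε hε).ofReal).const_mul ((ε:ℂ) * Complex.I)
      rw [integral_add hA hB, integral_const_mul]
      have e1 : ∫ p : ℝ×ℝ, ((σ p.1 * σ p.2 * ((p.1-p.2)^2/((p.1-p.2)^2+ε^2)) : ℝ) : ℂ)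
          = ((∫ p : ℝ×ℝ, σ p.1 * σ p.2 * ((p.1-p.2)^2/((p.1-p.2)^2+ε^2)) : ℝ) : ℂ) :=
        integral_ofReal
      have e2 : ∫ p : ℝ×ℝ, ((σ p.1 * σ p.2 * ((p.1+p.2)/((p.1-p.2)^2+ε^2)) : ℝ) : ℂ)
          = ((∫ p : ℝ×ℝ, σ p.1 * σ p.2 * ((p.1+p.2)/((p.1-p.2)^2+ε^2)) : ℝ) : ℂ) :=
        integral_ofReal
      rw [e1, e2, hS_zero ε]
      push_cast
      ring
    have : (2:ℂ) * ∫ p : ℝ×ℝ, F p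
        = ((∫ p : ℝ×ℝ, σ p.1 * σ p.2 * ((p.1-p.2)^2/((p.1-p.2)^2+ε^2)) : ℝ) : ℂ) := by
      rw [two_mul]; exact hsum
    have h2 : (∫ p : ℝ×ℝ, F p)
        = ((∫ p : ℝ×ℝ, σ p.1 * σ p.2 * ((p.1-p.2)^2/((p.1-p.2)^2+ε^2)) : ℝ) : ℂ) / 2 := by
      field_simp at this ⊢
      linear_combination this
    rw [h2]
    push_cast
    ring
  -- dominated convergence
  have hRlim : Tendsto (fun ε : ℝ => ∫ p : ℝ×ℝ, σ p.1 * σ p.2 * ((p.1-p.2)^2/((p.1-p.2)^2+ε^2)))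
      (nhdsWithin 0 (Set.Ioi 0)) (nhds ((∫ lam : ℝ, σ lam)^2)) := by
    have hprod : (∫ p : ℝ×ℝ, σ p.1 * σ p.2) = (∫ lam : ℝ, σ lam)^2 := by
      rw [hvol, integral_prod_mul]; ring
    have hae : ∀ᵐ p : ℝ×ℝ, p.1 ≠ p.2 := by
      rw [ae_iff]
      convert diag_null using 2
      ext p
      simp [not_not]
    have hmain := tendsto_integral_filter_of_dominated_convergence
      (μ := (volume : Measure (ℝ×ℝ)))
      (F := fun (ε : ℝ) (p : ℝ×ℝ) => σ p.1 * σ p.2 * ((p.1-p.2)^2/((p.1-p.2)^2+ε^2)))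
      (f := fun p : ℝ×ℝ => σ p.1 * σ p.2)
      (bound := fun p : ℝ×ℝ => σ p.1 * σ p.2)
      (l := nhdsWithin 0 (Set.Ioi 0))
      ?_ ?_ hσσ ?_
    · rw [hprod] at hmain; exact hmain
    · filter_upwards [self_mem_nhdsWithin] with ε hε
      exact (hR_int ε hε).aestronglyMeasurable
    · filter_upwards [self_mem_nhdsWithin] with ε hε
      exact Filter.Eventually.of_forall (hR_bound ε)
    · filter_upwards [hae] with p hp
      have hu : ((p.1 - p.2)^2 : ℝ) ≠ 0 := pow_ne_zero _ (sub_ne_zero.mpr hp)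
      have hupos : 0 < ((p.1 - p.2)^2 : ℝ) := lt_of_le_of_ne (sq_nonneg _) (Ne.symm hu)
      have hcont2 : Continuous (fun ε : ℝ =>
          σ p.1 * σ p.2 * ((p.1-p.2)^2/((p.1-p.2)^2+ε^2))) :=
        continuous_const.mul (Continuous.div continuous_const
          (continuous_const.add (continuous_pow 2))
          (fun x => ne_of_gt (by nlinarith [sq_nonneg x])))
      have htd := (hcont2.continuousAt (x := 0)).tendsto
      have h00 : σ p.1 * σ p.2 * ((p.1-p.2)^2/((p.1-p.2)^2+(0:ℝ)^2)) = σ p.1 * σ p.2 := by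
        rw [show ((0:ℝ)^2 = 0) by norm_num, add_zero, div_self hu, mul_one]
      rw [h00] at htd
      exact htd.mono_left nhdsWithin_le_nhds
  have hfin : Tendsto (fun ε : ℝ =>
      ((((∫ p : ℝ×ℝ, σ p.1 * σ p.2 * ((p.1-p.2)^2/((p.1-p.2)^2+ε^2))) / 2 : ℝ)) : ℂ))
      (nhdsWithin 0 (Set.Ioi 0)) (nhds ((((∫ lam : ℝ, σ lam) ^ 2 / 2 : ℝ) : ℂ))) :=
    (Complex.continuous_ofReal.tendsto _).comp (hRlim.div_const 2)
  refine hfin.congr' ?_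
  filter_upwards [self_mem_nhdsWithin] with ε hε
  exact (hEq ε hε).symm
end
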